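/- Let G be a finite group and let g ∈ G with g ≠ 1. Let κ be the rational conjugacy class of g, and suppose that the complement G ∖ κ is the underlying set of a subgroup of G. Then every normal subgroup N of G with N ∩ κ ≠ ∅ equals G; in other words, no proper normal subgroup of G contains any element of κ. -/
import Mathlib


/-- The rational conjugacy class of `g` in `G`: all elements conjugate to `g ^ k`
for some `k` coprime to the order of `g`. -/
def rationalClass {G : Type*} [Group G] (g : G) : Set G :=
  {h : G | ∃ k : ℕ, k.Coprime (orderOf g) ∧ IsConj (g ^ k) h}

private lemma mem_of_isConj_of_normal {G : Type*} [Group G] {N : Subgroup G}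
    (hN : N.Normal) {a b : G} (h : IsConj a b) (hb : b ∈ N) : a ∈ N := by
  obtain ⟨c, hc⟩ := h
  have he : (↑c : G) * a = b * ↑c := hc
  have ha : a = (↑c)⁻¹ * b * ↑c := by
    rw [mul_assoc, ← he, inv_mul_cancel_left]
  rw [ha]
  simpa using hN.conj_mem b hb (↑c)⁻¹

/-- If `g ≠ 1` and the complement of the rational conjugacy class `κ` of `g` is the
underlying set of a subgroup of `G`, then every normal subgroup of the finite group
`G` meeting `κ` is all of `G`. -/
theorem normal_subgroup_meeting_rationalClass_eq_top
    {G : Type*} [Group G] [Finite G] (g : G) (hg : g ≠ 1)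
    (hκ : ∃ H : Subgroup G, (H : Set G) = (rationalClass g)ᶜ)
    (N : Subgroup G) (hN : N.Normal)
    (hmeet : ((N : Set G) ∩ rationalClass g).Nonempty) :
    N = ⊤ := by
  classical
  obtain ⟨H, hH⟩ := hκ
  -- g ∈ κ
  have hgκ : g ∈ rationalClass g := ⟨1, Nat.coprime_one_left _, by
    simp only [pow_one]
    exact IsConj.refl g⟩
  -- 1 ∉ κ
  have h1κ : (1 : G) ∉ rationalClass g := by
    rintro ⟨k, hk, hconj⟩
    have hk1 : g ^ k = 1 := isConj_one_left.mp hconj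
    have hdvd : orderOf g ∣ k := orderOf_dvd_of_pow_eq_one hk1
    exact hg (orderOf_eq_one_iff.mp (hk.symm.eq_one_of_dvd hdvd))
  -- g ∈ N
  obtain ⟨h, hhN, k, hk, hconj⟩ := hmeet
  have hgkN : g ^ k ∈ N := mem_of_isConj_of_normal hN hconj hhN
  have hgN : g ∈ N := by
    have hbez : (1 : ℤ) = k * Nat.gcdA k (orderOf g) + orderOf g * Nat.gcdB k (orderOf g) := by
      have h2 := Nat.gcd_eq_gcd_ab k (orderOf g)
      rw [hk] at h2
      exact_mod_cast h2
    have hge : g = (g ^ k) ^ Nat.gcdA k (orderOf g) := by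
      conv_lhs => rw [← zpow_one g, hbez]
      rw [zpow_add, zpow_mul, zpow_mul]
      simp [pow_orderOf_eq_one]
    rw [hge]
    exact zpow_mem hgkN _
  -- κ ⊆ N
  have hκN : rationalClass g ⊆ (N : Set G) := by
    rintro x ⟨m, hm, hconjm⟩
    exact mem_of_isConj_of_normal hN hconjm.symm (pow_mem hgN m)
  -- cardinality argument
  have hGpos : 0 < Nat.card G := Nat.card_pos
  have hne : H ≠ ⊤ := by
    intro htop
    have hmem : g ∈ (H : Set G) := by rw [htop]; trivial
    rw [hH] at hmem
    exact hmem hgκ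
  have hHidx : 2 ≤ H.index := by
    have h0 : H.index ≠ 0 := Subgroup.index_ne_zero_of_finite
    have h1 : H.index ≠ 1 := fun e => hne (Subgroup.index_eq_one.mp e)
    omega
  have hHcard : 2 * Nat.card H ≤ Nat.card G := by
    calc 2 * Nat.card H ≤ H.index * Nat.card H := Nat.mul_le_mul_right _ hHidx
    _ = Nat.card G := by rw [mul_comm]; exact Subgroup.card_mul_index H
  have hfin : (rationalClass g).Finite := Set.toFinite _
  have hcompl : (rationalClass g).ncard + ((rationalClass g)ᶜ).ncard = Nat.card G := by
    simpa using Set.ncard_add_ncard_compl (rationalClass g)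
  have hHset : ((rationalClass g)ᶜ).ncard = Nat.card H := by
    rw [← hH, ← Nat.card_coe_set_eq]
    rfl
  have hins : insert (1 : G) (rationalClass g) ⊆ (N : Set G) := by
    rw [Set.insert_subset_iff]
    exact ⟨N.one_mem, hκN⟩
  have hNcard : (rationalClass g).ncard + 1 ≤ Nat.card N := by
    have h2 := Set.ncard_le_ncard hins (Set.toFinite _)
    rw [Set.ncard_insert_of_notMem h1κ hfin] at h2
    exact h2.trans_eq (Nat.card_coe_set_eq _).symm
  -- conclude
  rw [← Subgroup.index_eq_one]
  by_contra hidx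
  have hidx2 : 2 ≤ N.index := by
    have h0 : N.index ≠ 0 := Subgroup.index_ne_zero_of_finite
    omega
  have hNmul : N.index * Nat.card N = Nat.card G := by
    rw [mul_comm]; exact Subgroup.card_mul_index N
  have h2 : 2 * Nat.card N ≤ N.index * Nat.card N := Nat.mul_le_mul_right _ hidx2
  omega
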